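/- Fix α > 0 and let D_x^α denote the operator sending a twice differentiable function w of x > 0 to (D_x^α w)(x) := x^{2(α-1)/α} w''(x). Then for every integer j ≥ 1 and all x, t > 0, the j-th partial derivative of K_α in t equals the j-fold iterate of D_x^α applied (in the x variable, at fixed t) to K_α: ∂_t^j K_α(x,t) = ((D_x^α)^j K_α(·,t))(x). -/

import Mathlib

open MeasureTheory Filter Set

/-- The kernel `K_α(x,t) = (α^α/(2^α Γ(α/2))) x t^{-(α/2+1)} exp(-α² x^{2/α}/(4t))`. -/
noncomputable def Kker (α x t : ℝ) : ℝ :=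
  (α ^ α / (2 ^ α * Real.Gamma (α / 2))) * x * t ^ (-(α / 2 + 1)) *
    Real.exp (-(α ^ 2) * x ^ (2 / α) / (4 * t))

/-- The degenerate elliptic operator `(D_x^α w)(x) = x^{2(α-1)/α} w''(x)`. -/
noncomputable def Dx (α : ℝ) (w : ℝ → ℝ) : ℝ → ℝ :=
  fun x => x ^ (2 * (α - 1) / α) * iteratedDeriv 2 w x

open Polynomial

noncomputable def Pl (α : ℝ) : ℕ → Polynomial ℝ
  | 0 => 1
  | j + 1 => (C (α ^ 2 / 4) * X - C (α / 2 + 1 + j)) * Pl α j - X * derivative (Pl α j)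

lemma Pl_succ (α : ℝ) (j : ℕ) :
    Pl α (j + 1) = (C (α ^ 2 / 4) * X - C (α / 2 + 1 + j)) * Pl α j
      - X * derivative (Pl α j) := rfl

/-- Scaled Laguerre-type ODE satisfied by `Pl α j`. -/
lemma odeP (α : ℝ) (j : ℕ) :
    X * derivative (derivative (Pl α j))
      + (C (α / 2 + 1) - C (α ^ 2 / 4) * X) * derivative (Pl α j)
      + C (α ^ 2 / 4 * j) * Pl α j = 0 := by
  induction j with
  | zero => simp [Pl]
  | succ j ih =>
    apply Polynomial.funext
    intro y
    have hE : ∀ y : ℝ, y * eval y (derivative (derivative (Pl α j)))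
        + (α / 2 + 1 - α ^ 2 / 4 * y) * eval y (derivative (Pl α j))
        + α ^ 2 / 4 * j * eval y (Pl α j) = 0 := by
      intro y
      have := congrArg (eval y) ih
      simpa using this
    have hE' : ∀ y : ℝ, eval y (derivative (X * derivative (derivative (Pl α j))
        + (C (α / 2 + 1) - C (α ^ 2 / 4) * X) * derivative (Pl α j)
        + C (α ^ 2 / 4 * j) * Pl α j)) = 0 := by
      intro y; rw [ih]; simp
    have hE'2 := hE' y
    simp only [derivative_add, derivative_sub, derivative_mul, derivative_C, derivative_X,
      derivative_zero, derivative_one, eval_zero, eval_one,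
      eval_add, eval_sub, eval_mul, eval_C, eval_X, zero_mul, mul_zero, add_zero, zero_add,
      one_mul, mul_one] at hE'2
    simp only [Pl_succ, derivative_add, derivative_sub, derivative_mul, derivative_C,
      derivative_X, derivative_zero, derivative_one, eval_zero, eval_one,
      eval_add, eval_sub, eval_mul, eval_C, eval_X, zero_mul,
      mul_zero, add_zero, zero_add, one_mul, mul_one, Nat.cast_succ]
    linear_combination (α ^ 2 / 4 * y - (α / 2 + 1 + (j : ℝ)) - 1) * hE y - y * hE'2

/-- Closed candidate form for the iterated derivatives of the kernel. -/
noncomputable def Gk (α : ℝ) (j : ℕ) (x t : ℝ) : ℝ :=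
  (α ^ α / (2 ^ α * Real.Gamma (α / 2))) * x * t ^ (-(α / 2 + 1) - (j : ℝ)) *
    Real.exp (-(α ^ 2) * x ^ (2 / α) / (4 * t)) * eval (x ^ (2 / α) / t) (Pl α j)

lemma Gk_zero (α x t : ℝ) : Gk α 0 x t = Kker α x t := by
  simp [Gk, Kker, Pl]

noncomputable def Ql (α : ℝ) (j : ℕ) : Polynomial ℝ :=
  Pl α j + C (-(α / 2)) * (X * Pl α j) + C (2 / α) * (X * derivative (Pl α j))

/-- Key consequence of the ODE. -/
lemma eval_key (α : ℝ) (hα : α ≠ 0) (j : ℕ) (v : ℝ) :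
    eval v (C (-(α / 2)) * Ql α j + C (2 / α) * derivative (Ql α j))
      = eval v (Pl α (j + 1)) := by
  have h := congrArg (eval v) (odeP α j)
  simp only [derivative_add, derivative_sub, derivative_mul, derivative_C, derivative_X,
    derivative_zero, derivative_one, eval_zero, eval_one,
    eval_add, eval_sub, eval_mul, eval_C, eval_X, zero_mul, mul_zero, add_zero, zero_add,
    one_mul, mul_one] at h
  simp only [Ql, Pl_succ, derivative_add, derivative_sub, derivative_mul, derivative_C,
    derivative_X, derivative_zero, derivative_one, eval_zero, eval_one,
    eval_add, eval_sub, eval_mul, eval_C, eval_X, zero_mul,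
    mul_zero, add_zero, zero_add, one_mul, mul_one]
  field_simp
  linear_combination 64 * h

/-- t-derivative of `Gk`. -/
lemma hasDerivAt_Gk_t (α : ℝ) (x : ℝ) (j : ℕ) {t : ℝ} (ht : 0 < t) :
    HasDerivAt (fun s => Gk α j x s) (Gk α (j + 1) x t) t := by
  set c0 : ℝ := α ^ α / (2 ^ α * Real.Gamma (α / 2)) with hc0
  set u : ℝ := x ^ (2 / α) with hu
  set μ : ℝ := -(α / 2 + 1) - (j : ℝ) with hμ
  set p : Polynomial ℝ := Pl α j with hp
  have hexp : ∀ s : ℝ, -(α ^ 2) * u / (4 * s) = -(α ^ 2) * u / 4 * s⁻¹ := by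
    intro s; rw [div_eq_mul_inv, div_eq_mul_inv, mul_inv]; ring
  have hdiv : ∀ s : ℝ, u / s = u * s⁻¹ := fun s => div_eq_mul_inv u s
  have hfun : (fun s => Gk α j x s)
      = fun s => c0 * x * (s ^ μ * Real.exp (-(α ^ 2) * u / 4 * s⁻¹) * eval (u * s⁻¹) p) := by
    funext s
    simp only [Gk, hexp, hdiv, ← hc0, ← hu, ← hμ, ← hp]
    ring
  rw [hfun]
  have h1 : HasDerivAt (fun s : ℝ => s ^ μ) (μ * t ^ (μ - 1)) t :=
    Real.hasDerivAt_rpow_const (Or.inl ht.ne')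
  have hinv : HasDerivAt (fun s : ℝ => s⁻¹) (-(t ^ 2)⁻¹) t := hasDerivAt_inv ht.ne'
  have h2 : HasDerivAt (fun s : ℝ => Real.exp (-(α ^ 2) * u / 4 * s⁻¹))
      (Real.exp (-(α ^ 2) * u / 4 * t⁻¹) * (-(α ^ 2) * u / 4 * -(t ^ 2)⁻¹)) t :=
    (hinv.const_mul (-(α ^ 2) * u / 4)).exp
  have h3 : HasDerivAt (fun s : ℝ => eval (u * s⁻¹) p)
      (eval (u * t⁻¹) (derivative p) * (u * -(t ^ 2)⁻¹)) t :=
    by have := (p.hasDerivAt (u * t⁻¹)).comp t (hinv.const_mul u); exact this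
  have H := ((h1.mul h2).mul h3).const_mul (c0 * x)
  simp only [Pi.mul_apply] at H
  refine H.congr_deriv ?_
  have htpow : t ^ μ = t ^ (μ - 1) * t := by
    rw [show μ = μ - 1 + 1 by ring, Real.rpow_add_one ht.ne']; ring_nf
  have hcast : -(α / 2 + 1) - ((j : ℝ) + 1) = μ - 1 := by rw [hμ]; ring
  simp only [Gk, Pl_succ, eval_sub, eval_mul, eval_add, eval_C, eval_X, Nat.cast_succ,
    hexp, hdiv, ← hc0, ← hu, ← hp, hcast, htpow]
  field_simp
  ring

/-- first x-derivative of `Gk`. -/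
lemma hasDerivAt_Gk_x (α : ℝ) (hα : 0 < α) (t : ℝ) (ht : 0 < t) (j : ℕ) {x : ℝ} (hx : 0 < x) :
    HasDerivAt (fun y => Gk α j y t)
      (α ^ α / (2 ^ α * Real.Gamma (α / 2)) * t ^ (-(α / 2 + 1) - (j : ℝ)) *
        (Real.exp (-(α ^ 2) / (4 * t) * x ^ (2 / α)) *
          eval (t⁻¹ * x ^ (2 / α)) (Ql α j))) x := by
  set c0 : ℝ := α ^ α / (2 ^ α * Real.Gamma (α / 2)) with hc0
  set b : ℝ := 2 / α with hb
  set μ : ℝ := -(α / 2 + 1) - (j : ℝ) with hμ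
  set p : Polynomial ℝ := Pl α j with hp
  have hexp : ∀ y : ℝ, -(α ^ 2) * y ^ b / (4 * t) = -(α ^ 2) / (4 * t) * y ^ b := by
    intro y; ring
  have hdiv : ∀ y : ℝ, y ^ b / t = t⁻¹ * y ^ b := fun y => by
    rw [div_eq_mul_inv]; ring
  have hfun : (fun y => Gk α j y t)
      = fun y => c0 * t ^ μ *
          (y * Real.exp (-(α ^ 2) / (4 * t) * y ^ b) * eval (t⁻¹ * y ^ b) p) := by
    funext y
    simp only [Gk, hexp, hdiv, ← hc0, ← hb, ← hμ, ← hp]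
    ring
  rw [hfun]
  have hu : HasDerivAt (fun y : ℝ => y ^ b) (b * x ^ (b - 1)) x :=
    Real.hasDerivAt_rpow_const (Or.inl hx.ne')
  have hE : HasDerivAt (fun y : ℝ => Real.exp (-(α ^ 2) / (4 * t) * y ^ b))
      (Real.exp (-(α ^ 2) / (4 * t) * x ^ b) * (-(α ^ 2) / (4 * t) * (b * x ^ (b - 1)))) x :=
    (hu.const_mul (-(α ^ 2) / (4 * t))).exp
  have hq : HasDerivAt (fun y : ℝ => eval (t⁻¹ * y ^ b) p)
      (eval (t⁻¹ * x ^ b) (derivative p) * (t⁻¹ * (b * x ^ (b - 1)))) x :=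
    by have := (p.hasDerivAt (t⁻¹ * x ^ b)).comp x (hu.const_mul t⁻¹); exact this
  have H := (((hasDerivAt_id x).mul hE).mul hq).const_mul (c0 * t ^ μ)
  simp only [Pi.mul_apply] at H
  refine H.congr_deriv ?_
  have hxb : x ^ (b - 1) = x ^ b * x⁻¹ := by
    rw [show b - 1 = b + (-1) by ring, Real.rpow_add hx, Real.rpow_neg_one]
  rw [hxb]
  simp only [Ql, eval_add, eval_mul, eval_C, eval_X, ← hp, id_eq, hxb, hb]
  have hα' : α ≠ 0 := hα.ne'
  field_simp
  ring

/-- second x-derivative step. -/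
lemma hasDerivAt_Gk_x2 (α : ℝ) (hα : 0 < α) (t : ℝ) (ht : 0 < t) (j : ℕ) {x : ℝ} (hx : 0 < x) :
    HasDerivAt (fun y => α ^ α / (2 ^ α * Real.Gamma (α / 2)) * t ^ (-(α / 2 + 1) - (j : ℝ)) *
        (Real.exp (-(α ^ 2) / (4 * t) * y ^ (2 / α)) *
          eval (t⁻¹ * y ^ (2 / α)) (Ql α j)))
      (α ^ α / (2 ^ α * Real.Gamma (α / 2)) * t ^ (-(α / 2 + 1) - (j : ℝ)) *
        (Real.exp (-(α ^ 2) / (4 * t) * x ^ (2 / α)) * x ^ (2 / α - 1) * t⁻¹ *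
          eval (t⁻¹ * x ^ (2 / α))
            (C (-(α / 2)) * Ql α j + C (2 / α) * derivative (Ql α j)))) x := by
  set c0 : ℝ := α ^ α / (2 ^ α * Real.Gamma (α / 2)) with hc0
  set b : ℝ := 2 / α with hb
  set μ : ℝ := -(α / 2 + 1) - (j : ℝ) with hμ
  set q : Polynomial ℝ := Ql α j with hq0
  have hu : HasDerivAt (fun y : ℝ => y ^ b) (b * x ^ (b - 1)) x :=
    Real.hasDerivAt_rpow_const (Or.inl hx.ne')
  have hE : HasDerivAt (fun y : ℝ => Real.exp (-(α ^ 2) / (4 * t) * y ^ b))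
      (Real.exp (-(α ^ 2) / (4 * t) * x ^ b) * (-(α ^ 2) / (4 * t) * (b * x ^ (b - 1)))) x :=
    (hu.const_mul (-(α ^ 2) / (4 * t))).exp
  have hqd : HasDerivAt (fun y : ℝ => eval (t⁻¹ * y ^ b) q)
      (eval (t⁻¹ * x ^ b) (derivative q) * (t⁻¹ * (b * x ^ (b - 1)))) x :=
    by have := (q.hasDerivAt (t⁻¹ * x ^ b)).comp x (hu.const_mul t⁻¹); exact this
  have H := (hE.mul hqd).const_mul (c0 * t ^ μ)
  simp only [Pi.mul_apply] at H
  refine H.congr_deriv ?_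
  simp only [eval_add, eval_mul, eval_C, eval_X, ← hq0, hb]
  have hα' : α ≠ 0 := hα.ne'
  field_simp
  ring

/-- Lemma A : iterated t-derivatives. -/
lemma lemA (α : ℝ) (hα : 0 < α) (x : ℝ) (j : ℕ) :
    ∀ t ∈ Ioi (0 : ℝ), iteratedDeriv j (fun s => Kker α x s) t = Gk α j x t := by
  induction j with
  | zero => intro t ht; simp [Gk_zero]
  | succ j ih =>
    intro t ht
    rw [iteratedDeriv_succ]
    have hev : iteratedDeriv j (fun s => Kker α x s) =ᶠ[nhds t] fun s => Gk α j x s := by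
      filter_upwards [Ioi_mem_nhds ht] with s hs using ih s hs
    rw [hev.deriv_eq]
    exact (hasDerivAt_Gk_t α x j ht).deriv

/-- Lemma B : iterated `Dx`. -/
lemma lemB (α : ℝ) (hα : 0 < α) (t : ℝ) (ht : 0 < t) (j : ℕ) :
    ∀ x ∈ Ioi (0 : ℝ), (Dx α)^[j] (fun y => Kker α y t) x = Gk α j x t := by
  induction j with
  | zero => intro x hx; simp [Gk_zero]
  | succ j ih =>
    intro x hx
    have hx' : (0 : ℝ) < x := hx
    rw [Function.iterate_succ_apply']
    show x ^ (2 * (α - 1) / α) * iteratedDeriv 2 ((Dx α)^[j] fun y => Kker α y t) x = _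
    have hev : (Dx α)^[j] (fun y => Kker α y t) =ᶠ[nhds x] fun y => Gk α j y t := by
      filter_upwards [Ioi_mem_nhds hx'] with y hy using ih y hy
    have h2 : iteratedDeriv 2 ((Dx α)^[j] fun y => Kker α y t) x
        = deriv (deriv (fun y => Gk α j y t)) x := by
      rw [show (2 : ℕ) = 1 + 1 from rfl, iteratedDeriv_succ, iteratedDeriv_one]
      exact (hev.deriv).deriv_eq
    have hd1 : deriv (fun y => Gk α j y t) =ᶠ[nhds x]
        fun y => α ^ α / (2 ^ α * Real.Gamma (α / 2)) * t ^ (-(α / 2 + 1) - (j : ℝ)) *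
          (Real.exp (-(α ^ 2) / (4 * t) * y ^ (2 / α)) *
            eval (t⁻¹ * y ^ (2 / α)) (Ql α j)) := by
      filter_upwards [Ioi_mem_nhds hx'] with y hy using (hasDerivAt_Gk_x α hα t ht j hy).deriv
    rw [h2, hd1.deriv_eq, (hasDerivAt_Gk_x2 α hα t ht j hx').deriv]
    have hα' : α ≠ 0 := hα.ne'
    have hpow : x ^ (2 * (α - 1) / α) * x ^ (2 / α - 1) = x := by
      rw [← Real.rpow_add hx', show 2 * (α - 1) / α + (2 / α - 1) = 1 by field_simp; ring,
        Real.rpow_one]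
    have hkey := eval_key α hα' j (t⁻¹ * x ^ (2 / α))
    have htm : t ^ (-(α / 2 + 1) - (j : ℝ)) * t⁻¹
        = t ^ (-(α / 2 + 1) - ((j : ℝ) + 1)) := by
      rw [show -(α / 2 + 1) - ((j : ℝ) + 1) = (-(α / 2 + 1) - (j : ℝ)) + (-1) by ring,
        Real.rpow_add ht, Real.rpow_neg_one]
    have hexp : -(α ^ 2) / (4 * t) * x ^ (2 / α) = -(α ^ 2) * x ^ (2 / α) / (4 * t) := by ring
    have hdiv : t⁻¹ * x ^ (2 / α) = x ^ (2 / α) / t := by rw [div_eq_mul_inv]; ring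
    simp only [Gk, Nat.cast_succ]
    rw [hkey] at *
    rw [hexp, hdiv] at *
    calc x ^ (2 * (α - 1) / α) *
          (α ^ α / (2 ^ α * Real.Gamma (α / 2)) * t ^ (-(α / 2 + 1) - (j : ℝ)) *
            (Real.exp (-(α ^ 2) * x ^ (2 / α) / (4 * t)) * x ^ (2 / α - 1) * t⁻¹ *
              eval (x ^ (2 / α) / t) (Pl α (j + 1))))
        = (x ^ (2 * (α - 1) / α) * x ^ (2 / α - 1)) *
            (α ^ α / (2 ^ α * Real.Gamma (α / 2)) *
              (t ^ (-(α / 2 + 1) - (j : ℝ)) * t⁻¹) *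
              (Real.exp (-(α ^ 2) * x ^ (2 / α) / (4 * t)) *
                eval (x ^ (2 / α) / t) (Pl α (j + 1)))) := by ring
      _ = _ := by rw [hpow, htm]; ring

theorem stmt4 (α : ℝ) (hα : 0 < α) (j : ℕ) (hj : 1 ≤ j) (x t : ℝ)
    (hx : 0 < x) (ht : 0 < t) :
    iteratedDeriv j (fun s => Kker α x s) t = (Dx α)^[j] (fun y => Kker α y t) x := by
  rw [lemA α hα x j t ht, lemB α hα t ht j x hx]
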